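/- If S and T are finite semigroups and φ: S → T is a surjective homomorphism that is injective on every R-class of S (i.e., whenever s₁ R s₂ in S and φ(s₁) = φ(s₂), then s₁ = s₂), then for every idempotent e of T, the preimage φ⁻¹(e) is an R-trivial subsemigroup of S. -/
import Mathlib


/-- Green's R-preorder: `a ≤_R b` iff `a S¹ ⊆ b S¹`, i.e. `a = b` or `a = b*x`. -/
def rLe {S : Type*} [Semigroup S] (a b : S) : Prop := a = b ∨ ∃ x, a = b * x

/-- Green's R-equivalence. -/
def rEquiv {S : Type*} [Semigroup S] (a b : S) : Prop := rLe a b ∧ rLe b a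

/-- R-preorder relative to a subsemigroup (subset) `P`. -/
def rLeIn {S : Type*} [Semigroup S] (P : Set S) (a b : S) : Prop :=
  a = b ∨ ∃ x ∈ P, a = b * x

/-- R-equivalence relative to a subset `P`. -/
def rEquivIn {S : Type*} [Semigroup S] (P : Set S) (a b : S) : Prop :=
  rLeIn P a b ∧ rLeIn P b a

theorem stmt0 {S T : Type*} [Semigroup S] [Fintype S] [Semigroup T] [Fintype T]
    (φ : S → T) (hhom : ∀ a b : S, φ (a * b) = φ a * φ b)
    (hsurj : Function.Surjective φ)
    (h11R : ∀ s₁ s₂ : S, rEquiv s₁ s₂ → φ s₁ = φ s₂ → s₁ = s₂)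
    (e : T) (he : e * e = e) :
    (∀ s₁ s₂ : S, φ s₁ = e → φ s₂ = e → φ (s₁ * s₂) = e) ∧
    (∀ s₁ s₂ : S, φ s₁ = e → φ s₂ = e →
      rEquivIn {s : S | φ s = e} s₁ s₂ → s₁ = s₂) := by
  refine ⟨fun s₁ s₂ h1 h2 => by rw [hhom, h1, h2, he], ?_⟩
  intro s₁ s₂ h1 h2 ⟨ha, hb⟩
  have conv : ∀ a b : S, rLeIn {s : S | φ s = e} a b → rLe a b := by
    rintro a b (rfl | ⟨x, _, rfl⟩)
    · exact Or.inl rfl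
    · exact Or.inr ⟨x, rfl⟩
  exact h11R s₁ s₂ ⟨conv _ _ ha, conv _ _ hb⟩ (h1.trans h2.symm)
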